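/- Perfect secrecy requires the key space to be at least as large as the message space: if for all m, m' and all c, Pr_k[Enc(k,m)=c] = Pr_k[Enc(k,m')=c], and decryption correctness holds (Dec(k,Enc(k,m)) = m), then |K| ≥ |M|. -/

import Mathlib

open Finset

/-- Shannon's bound: perfect secrecy plus decryption correctness requires
the key space to be at least as large as the message space. -/
theorem shannon_key_space_bound
    {K M C : Type*} [Fintype K] [Fintype M] [Fintype C] [DecidableEq C]
    (Enc : K → M → C) (Dec : K → C → M)
    (hcorrect : ∀ (k : K) (m : M), Dec k (Enc k m) = m)
    (p : K → ℝ) (hp0 : ∀ k, 0 < p k) (hp1 : ∑ k : K, p k = 1)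
    (hsecrecy : ∀ (m m' : M) (c : C),
      (∑ k : K, if Enc k m = c then p k else 0)
        = (∑ k : K, if Enc k m' = c then p k else 0)) :
    Fintype.card M ≤ Fintype.card K := by
  classical
  rcases isEmpty_or_nonempty M with hM | hM
  · simp [Fintype.card_eq_zero]
  rcases isEmpty_or_nonempty K with hK | hK
  · simp at hp1
  obtain ⟨m₀⟩ := hM
  obtain ⟨k₀⟩ := hK
  set c : C := Enc k₀ m₀ with hc
  have hexists : ∀ m : M, ∃ k : K, Enc k m = c := by
    intro m
    by_contra h
    push_neg at h
    have h0 : (∑ k : K, if Enc k m = c then p k else 0) = 0 := by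
      apply Finset.sum_eq_zero
      intro k _
      simp [h k]
    have hpos : (0 : ℝ) < ∑ k : K, if Enc k m₀ = c then p k else 0 := by
      have : p k₀ ≤ ∑ k : K, if Enc k m₀ = c then p k else 0 := by
        have := Finset.single_le_sum
          (f := fun k : K => if Enc k m₀ = c then p k else 0)
          (fun k _ => by split <;> [exact (hp0 k).le; rfl]) (Finset.mem_univ k₀)
        simpa [hc] using this
      linarith [hp0 k₀]
    rw [← hsecrecy m m₀ c, h0] at hpos
    exact lt_irrefl _ hpos
  choose f hf using hexists
  have hinj : Function.Injective f := by
    intro m m' h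
    have h1 : Dec (f m) c = m := by rw [← hf m]; exact hcorrect _ _
    have h2 : Dec (f m') c = m' := by rw [← hf m']; exact hcorrect _ _
    rw [← h1, ← h2, h]
  exact Fintype.card_le_of_injective f hinj
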